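/- Let N be a positive integer, F ∈ Matrix (Fin N) (Fin N) ℂ a unitary matrix, and c ∈ ℝ with 0 < c ≤ 1. Let m : Ω → Fin N → ℝ be a random vector on a probability space whose entries take values in {0,1} and satisfy 𝔼[m i] = c for each i (uniform sampling density). Then for every fixed vector e ∈ ℂ^N, 𝔼[‖(Fᴴ · diag(m) · F) e‖²] = c · ‖e‖². -/

import Mathlib

open MeasureTheory Matrix

lemma sum_sq_norm_eq_re {N : ℕ} (y : Fin N → ℂ) :
    ∑ i, ‖y i‖ ^ 2 = (star y ⬝ᵥ y).re := by
  rw [dotProduct, Complex.re_sum]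
  congr 1
  ext i
  rw [Pi.star_apply, mul_comm, Complex.star_def, Complex.mul_conj]
  rw [Complex.ofReal_re, ← Complex.sq_norm]

lemma sum_sq_norm_mulVec {N : ℕ} (A : Matrix (Fin N) (Fin N) ℂ)
    (hA : Aᴴ * A = 1) (x : Fin N → ℂ) :
    ∑ i, ‖(A.mulVec x) i‖ ^ 2 = ∑ i, ‖x i‖ ^ 2 := by
  rw [sum_sq_norm_eq_re, sum_sq_norm_eq_re x, star_mulVec,
    dotProduct_mulVec, vecMul_vecMul, hA, vecMul_one]

/-- **Uniform sampling density: the ensemble projected loss is proportional to the MSE.**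
Let `F` be an `N × N` unitary matrix and `0 < c ≤ 1`.  Let `m` be a random vector with
entries in `{0,1}` and `𝔼[m i] = c` for every `i`.  Then for every fixed `e ∈ ℂ^N`,
`𝔼[‖(Fᴴ diag(m) F) e‖²] = c ‖e‖²` (squared Euclidean norms). -/
theorem ensemble_projected_loss_uniform_density
    {N : ℕ} (hN : 0 < N)
    (F : Matrix (Fin N) (Fin N) ℂ)
    (hF₁ : Fᴴ * F = 1) (hF₂ : F * Fᴴ = 1)
    (c : ℝ) (hc : 0 < c) (hc1 : c ≤ 1)
    {Ω : Type*} [MeasurableSpace Ω] (Pr : Measure Ω) [IsProbabilityMeasure Pr]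
    (m : Ω → Fin N → ℝ)
    (hm01 : ∀ ω i, m ω i = 0 ∨ m ω i = 1)
    (hmmeas : ∀ i, Measurable (fun ω => m ω i))
    (hmean : ∀ i, ∫ ω, m ω i ∂Pr = c)
    (e : Fin N → ℂ) :
    ∫ ω, ∑ i, ‖((Fᴴ * Matrix.diagonal (fun k => (m ω k : ℂ)) * F).mulVec e) i‖ ^ 2 ∂Pr
      = c * ∑ i, ‖e i‖ ^ 2 := by
  set y := F.mulVec e with hy
  have key : ∀ ω, (∑ i, ‖((Fᴴ * Matrix.diagonal (fun k => (m ω k : ℂ)) * F).mulVec e) i‖ ^ 2)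
      = ∑ i, m ω i * ‖y i‖ ^ 2 := by
    intro ω
    have h1 : (Fᴴ * Matrix.diagonal (fun k => (m ω k : ℂ)) * F).mulVec e
        = Fᴴ.mulVec ((Matrix.diagonal (fun k => (m ω k : ℂ))).mulVec y) := by
      rw [hy, ← mulVec_mulVec, ← mulVec_mulVec]
    rw [h1, sum_sq_norm_mulVec Fᴴ (by rwa [conjTranspose_conjTranspose])]
    congr 1
    ext i
    rw [mulVec_diagonal]
    rw [norm_mul, mul_pow, Complex.norm_real]
    rcases hm01 ω i with h | h <;> simp [h]
  simp_rw [key]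
  have hint : ∀ i : Fin N, Integrable (fun ω => m ω i * ‖y i‖ ^ 2) Pr := by
    intro i
    refine ⟨((hmmeas i).mul_const _).aestronglyMeasurable, ?_⟩
    apply HasFiniteIntegral.of_bounded (C := ‖y i‖ ^ 2)
    filter_upwards with ω
    rcases hm01 ω i with h | h <;> simp [h, sq_nonneg]
  rw [integral_finset_sum _ (fun i _ => hint i)]
  have : ∀ i : Fin N, ∫ ω, m ω i * ‖y i‖ ^ 2 ∂Pr = c * ‖y i‖ ^ 2 := by
    intro i
    rw [integral_mul_const, hmean i]
  simp_rw [this, ← Finset.mul_sum]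
  congr 1
  exact sum_sq_norm_mulVec F hF₁ e
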